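/- Let σ ∈ ℂ[[y]] with A_σ = ℂ[x]/I_σ of finite dimension r, let B, B' be bases of A_σ represented by polynomials, and let g ∈ ℂ[x]. Then H_{g⋆σ}^{B,B'} = (M_g^B)^T · H_σ^{B,B'} = H_σ^{B,B'} · M_g^{B'}, where M_g^B (resp. M_g^{B'}) is the matrix of multiplication by g in A_σ in basis B (resp. B'). -/

import Mathlib

/-- The ideal `I_σ = ker H_σ = { p : ∀ q, ⟨σ | p q⟩ = 0 }`. -/
noncomputable def Iσ (n : ℕ) (σ : Module.Dual ℂ (MvPolynomial (Fin n) ℂ)) :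
    Ideal (MvPolynomial (Fin n) ℂ) where
  carrier := {p | ∀ q, σ (p * q) = 0}
  add_mem' := by
    intro a b ha hb q
    rw [add_mul, map_add, ha q, hb q, add_zero]
  zero_mem' := by intro q; rw [zero_mul, map_zero]
  smul_mem' := by
    intro c p hp q
    have := hp (c * q)
    rw [smul_eq_mul, show c * p * q = p * (c * q) by ring]
    exact this

/-- `H_{g⋆σ}^{B,B'} = (M_g^B)ᵀ · H_σ^{B,B'} = H_σ^{B,B'} · M_g^{B'}`, where `B`,
`B'` are bases of `A_σ` represented by polynomials and `M_g^B` is the matrix of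
multiplication by `g` in basis `B` (columns = coordinates of `g·bᵢ`). -/
theorem stmt13 (n r : ℕ) (σ : Module.Dual ℂ (MvPolynomial (Fin n) ℂ))
    (g : MvPolynomial (Fin n) ℂ)
    (B B' : Fin r → MvPolynomial (Fin n) ℂ)
    (b b' : Module.Basis (Fin r) ℂ (MvPolynomial (Fin n) ℂ ⧸ Iσ n σ))
    (hb : ∀ i, b i = Ideal.Quotient.mk (Iσ n σ) (B i))
    (hb' : ∀ i, b' i = Ideal.Quotient.mk (Iσ n σ) (B' i)) :
    (Matrix.of fun i j : Fin r => σ (g * (B i * B' j))) =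
      Matrix.transpose (LinearMap.toMatrix b b
          (LinearMap.mulLeft ℂ (Ideal.Quotient.mk (Iσ n σ) g))) *
        (Matrix.of fun i j : Fin r => σ (B i * B' j)) ∧
    (Matrix.of fun i j : Fin r => σ (g * (B i * B' j))) =
      (Matrix.of fun i j : Fin r => σ (B i * B' j)) *
        LinearMap.toMatrix b' b'
          (LinearMap.mulLeft ℂ (Ideal.Quotient.mk (Iσ n σ) g)) := by

  have key : ∀ p q s : MvPolynomial (Fin n) ℂ,
      Ideal.Quotient.mk (Iσ n σ) p = Ideal.Quotient.mk (Iσ n σ) q →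
      σ (p * s) = σ (q * s) := by
    intro p q s h
    have hm : p - q ∈ Iσ n σ := Ideal.Quotient.eq.mp h
    have h0 := hm s
    rwa [sub_mul, map_sub, sub_eq_zero] at h0
  set M := LinearMap.toMatrix b b
      (LinearMap.mulLeft ℂ (Ideal.Quotient.mk (Iσ n σ) g)) with hM
  set M' := LinearMap.toMatrix b' b'
      (LinearMap.mulLeft ℂ (Ideal.Quotient.mk (Iσ n σ) g)) with hM'
  have expand : ∀ (c : Module.Basis (Fin r) ℂ (MvPolynomial (Fin n) ℂ ⧸ Iσ n σ))
      (C : Fin r → MvPolynomial (Fin n) ℂ)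
      (hc : ∀ i, c i = Ideal.Quotient.mk (Iσ n σ) (C i))
      (N : Matrix (Fin r) (Fin r) ℂ)
      (hN : N = LinearMap.toMatrix c c
        (LinearMap.mulLeft ℂ (Ideal.Quotient.mk (Iσ n σ) g))) (i : Fin r),
      Ideal.Quotient.mk (Iσ n σ) (g * C i)
        = Ideal.Quotient.mk (Iσ n σ) (∑ k, N k i • C k) := by
    intro c C hc N hN i
    have h1 : LinearMap.mulLeft ℂ (Ideal.Quotient.mk (Iσ n σ) g) (c i)
        = ∑ k, N k i • c k := by
      conv_lhs => rw [← c.sum_repr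
        (LinearMap.mulLeft ℂ (Ideal.Quotient.mk (Iσ n σ) g) (c i))]
      exact Finset.sum_congr rfl fun k _ => by rw [hN, LinearMap.toMatrix_apply]
    have h2 : Ideal.Quotient.mk (Iσ n σ) (∑ k, N k i • C k)
        = ∑ k, N k i • Ideal.Quotient.mk (Iσ n σ) (C k) := by
      rw [← Ideal.Quotient.mkₐ_eq_mk ℂ (Iσ n σ), map_sum]
      exact Finset.sum_congr rfl fun k _ => by rw [map_smul]
    rw [h2, map_mul]
    rw [← hc i]
    have : (Ideal.Quotient.mk (Iσ n σ)) g * c i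
        = LinearMap.mulLeft ℂ (Ideal.Quotient.mk (Iσ n σ) g) (c i) := rfl
    rw [this, h1]
    exact Finset.sum_congr rfl fun k _ => by rw [hc k]
  constructor
  · ext i j
    rw [Matrix.mul_apply]
    simp only [Matrix.of_apply, Matrix.transpose_apply]
    have : σ (g * (B i * B' j)) = σ ((∑ k, M k i • B k) * B' j) := by
      rw [← mul_assoc]
      exact key _ _ _ (expand b B hb M hM i)
    rw [this, Finset.sum_mul, map_sum]
    exact Finset.sum_congr rfl fun k _ => by
      rw [smul_mul_assoc, map_smul, smul_eq_mul]
  · ext i j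
    rw [Matrix.mul_apply]
    simp only [Matrix.of_apply]
    have : σ (g * (B i * B' j)) = σ ((∑ k, M' k j • B' k) * B i) := by
      rw [show g * (B i * B' j) = g * B' j * B i by ring]
      exact key _ _ _ (expand b' B' hb' M' hM' j)
    rw [this, Finset.sum_mul, map_sum]
    exact Finset.sum_congr rfl fun k _ => by
      rw [smul_mul_assoc, map_smul, smul_eq_mul, mul_comm (B' k) (B i), mul_comm]
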